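/- Let G be a finite connected multigraph with edge set E, and assign to each edge e a weight κ(e) ∈ ℤ[δ] with κ(e) = 1 or κ(e) = δ. Let A be the weighted Laplacian matrix of G (A_{ij} = −∑ κ(e) over edges e between distinct vertices i and j, and A_{ii} = −∑_{j≠i} A_{ij}). Then the determinant of the (1,1)-minor of A equals ∑_T ∏_{e∈T} κ(e), where the sum is over all spanning trees T of G (the weighted Matrix-Tree theorem). -/

import Mathlib

open Finset

set_option maxHeartbeats 1000000 in
private lemma det_sum_rows' {R : Type*} [CommRing R] {m : ℕ} {E : Type} [DecidableEq E]
    (s : Finset E) (g : Fin m → E → Fin m → R) :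
    (Matrix.of fun i j => ∑ e ∈ s, g i e j).det
      = ∑ f ∈ Fintype.piFinset (fun _ : Fin m => s),
          (Matrix.of fun i j => g i (f i) j).det := by
  have key : ∀ (v : Fin m → Fin m → R), (Matrix.of v).det
      = (Matrix.detRowAlternating (R := R) (n := Fin m)).toMultilinearMap v := fun v => rfl
  rw [key]
  have h1 : (fun i j => ∑ e ∈ s, g i e j) = (fun i => ∑ e ∈ s, g i e) := by
    funext i j; simp
  rw [h1, MultilinearMap.map_sum_finset]
  exact Finset.sum_congr rfl (fun f _ => (key _).symm)

private lemma det_smul_rows' {R : Type*} [CommRing R] {m : ℕ} (c : Fin m → R)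
    (w : Fin m → Fin m → R) :
    (Matrix.of fun i j => c i * w i j).det = (∏ i, c i) * (Matrix.of w).det := by
  have key : ∀ (v : Fin m → Fin m → R), (Matrix.of v).det
      = (Matrix.detRowAlternating (R := R) (n := Fin m)).toMultilinearMap v := fun v => rfl
  rw [key, key]
  have h1 : (fun i j => c i * w i j) = (fun i => c i • w i) := by
    funext i j; simp
  rw [h1, MultilinearMap.map_smul_univ]
  simp

private lemma det_eq_zero_of_sum_rows' {R : Type*} [CommRing R] {m : Type*} [DecidableEq m]
    [Fintype m] (M : Matrix m m R) (s : Finset m) (hs : s.Nonempty)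
    (h : ∀ j, ∑ i ∈ s, M i j = 0) : M.det = 0 := by
  classical
  obtain ⟨i₀, hi₀⟩ := hs
  set c : m → R := fun i => if i ∈ s.erase i₀ then (-1 : R) else 0 with hc
  have hrow : M i₀ = ∑ k, c k • M k := by
    funext j
    have h2 := h j
    rw [← Finset.add_sum_erase _ _ hi₀] at h2
    have h3 : ∑ k, (c k • M k) j = ∑ k ∈ s.erase i₀, -(M k j) := by
      rw [Finset.sum_congr rfl (fun k _ => show (c k • M k) j = if k ∈ s.erase i₀ then -(M k j) else 0 from by
        simp only [hc, Pi.smul_apply, smul_eq_mul]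
        by_cases hk : k ∈ s.erase i₀
        · rw [if_pos hk, if_pos hk]; ring
        · rw [if_neg hk, if_neg hk]; ring)]
      rw [← Finset.sum_filter]
      congr 1
      ext a
      simp [Finset.mem_erase]
    rw [Finset.sum_apply, h3, Finset.sum_neg_distrib]
    exact eq_neg_of_add_eq_zero_left h2
  have hdet := Matrix.det_updateRow_sum M i₀ c
  rw [← hrow, Matrix.updateRow_eq_self] at hdet
  rw [hdet]
  simp [hc, Finset.notMem_erase]

open Finset in
open scoped Classical in
/-- Weighted Matrix-Tree theorem.  Let `G` be a finite connected multigraph on vertices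
`{0, …, n}` with edge set `E`, endpoints `ends : E → Sym2 (Fin (n+1))`, and edge weights
`κ(e) ∈ ℤ[δ]` with each `κ(e) = 1` or `κ(e) = δ`.  Let `A` be the weighted Laplacian
(`A i j = −∑ κ(e)` over edges between distinct `i, j`, and `A i i = −∑_{j≠i} A i j`).
Then the determinant of the `(1,1)`-minor of `A` (deleting vertex `0`) equals
`∑_T ∏_{e ∈ T} κ(e)` over all spanning trees `T` of `G` (encoded as edge sets of
cardinality `n` connecting all the vertices). -/
theorem stmt_19 (n : ℕ) (E : Type) [Fintype E] [DecidableEq E]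
    (ends : E → Sym2 (Fin (n + 1)))
    (κ : E → Polynomial ℤ) (hκ : ∀ e, κ e = 1 ∨ κ e = Polynomial.X)
    (hconn : ∀ u v : Fin (n + 1),
      Relation.EqvGen (fun u v => ∃ e : E, ends e = s(u, v)) u v)
    (A : Matrix (Fin (n + 1)) (Fin (n + 1)) (Polynomial ℤ))
    (hAoff : ∀ i j, i ≠ j →
      A i j = -(∑ e ∈ Finset.univ.filter (fun e => ends e = s(i, j)), κ e))
    (hAdiag : ∀ i, A i i = -(∑ j ∈ Finset.univ.erase i, A i j)) :
    (A.submatrix (Fin.succ) (Fin.succ)).det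
      = ∑ T ∈ (Finset.univ : Finset E).powerset.filter
          (fun T => T.card = n ∧ ∀ u v : Fin (n + 1),
            Relation.EqvGen (fun u v => ∃ e ∈ T, ends e = s(u, v)) u v),
        ∏ e ∈ T, κ e := by
  classical
  set o1 : E → Fin (n + 1) := fun e => (Quot.out (ends e)).1 with ho1
  set o2 : E → Fin (n + 1) := fun e => (Quot.out (ends e)).2 with ho2
  have hout : ∀ e, s(o1 e, o2 e) = ends e := by
    intro e
    show Sym2.mk _ _ = _
    rw [ho1, ho2]
    exact Quot.out_eq (ends e)
  have F1 : ∀ e u v, ends e = s(u, v) → (o1 e = u ∧ o2 e = v) ∨ (o1 e = v ∧ o2 e = u) := by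
    intro e u v h
    rw [← hout e, Sym2.eq_iff] at h
    exact h
  set N : Fin (n + 1) → E → ℤ :=
    fun x e => (if x = o1 e then 1 else 0) - (if x = o2 e then 1 else 0) with hN
  have hNsum : ∀ e, ∑ x, N x e = 0 := by
    intro e
    simp [hN, Finset.sum_sub_distrib]
  have hNoff : ∀ e (x y : Fin (n + 1)), x ≠ y →
      N x e * N y e = if ends e = s(x, y) then -1 else 0 := by
    intro e x y hxy
    have hiff : (ends e = s(x, y)) ↔ ((o1 e = x ∧ o2 e = y) ∨ (o1 e = y ∧ o2 e = x)) := by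
      rw [← hout e, Sym2.eq_iff]
    rw [hN]
    by_cases h : ends e = s(x, y)
    · rw [if_pos h]
      rcases hiff.mp h with ⟨h1, h2⟩ | ⟨h1, h2⟩
      · rw [← h1, ← h2] at hxy ⊢
        simp [hxy, Ne.symm hxy]
      · rw [← h1, ← h2] at hxy ⊢
        simp [hxy, Ne.symm hxy]
    · rw [if_neg h]
      have hnot := hiff.not.mp h
      push_neg at hnot
      by_cases hx1 : x = o1 e
      · have hy1 : y ≠ o1 e := fun hy => hxy (hx1.trans hy.symm)
        have hy2 : y ≠ o2 e := fun hy => (hnot.1 hx1.symm) hy.symm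
        simp [hy1, hy2]
      · by_cases hx2 : x = o2 e
        · have hy2 : y ≠ o2 e := fun hy => hxy (hx2.trans hy.symm)
          have hy1 : y ≠ o1 e := fun hy => (hnot.2 hy.symm) hx2.symm
          simp [hy1, hy2]
        · simp [hx1, hx2]
  have hA : ∀ x y, A x y = ∑ e, κ e * ((N x e * N y e : ℤ) : Polynomial ℤ) := by
    have hAoff' : ∀ x y, x ≠ y →
        A x y = ∑ e, κ e * ((N x e * N y e : ℤ) : Polynomial ℤ) := by
      intro x y hxy
      rw [hAoff x y hxy]
      rw [Finset.sum_congr rfl (fun e _ =>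
        show κ e * ((N x e * N y e : ℤ) : Polynomial ℤ)
            = if ends e = s(x, y) then -κ e else 0 from by
          rw [hNoff e x y hxy]
          split_ifs <;> simp)]
      rw [← Finset.sum_filter]
      simp
    intro x y
    by_cases hxy : x = y
    · subst hxy
      rw [hAdiag x]
      rw [Finset.sum_congr rfl (fun y hy =>
        hAoff' x y (Ne.symm (Finset.ne_of_mem_erase hy)))]
      rw [Finset.sum_comm]
      have key : ∀ e : E, ∑ y ∈ Finset.univ.erase x, κ e * ((N x e * N y e : ℤ) : Polynomial ℤ)
          = -(κ e * ((N x e * N x e : ℤ) : Polynomial ℤ)) := by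
        intro e
        have h1 : ∑ y ∈ Finset.univ.erase x, (N x e * N y e : ℤ)
            = (∑ y : Fin (n+1), N x e * N y e) - N x e * N x e := by
          rw [Finset.sum_erase_eq_sub (Finset.mem_univ x)]
        have h2 : (∑ y : Fin (n+1), N x e * N y e) = 0 := by
          rw [← Finset.mul_sum, hNsum e, mul_zero]
        have h3 : ∑ y ∈ Finset.univ.erase x, κ e * ((N x e * N y e : ℤ) : Polynomial ℤ)
            = κ e * ((∑ y ∈ Finset.univ.erase x, (N x e * N y e : ℤ) : ℤ) : Polynomial ℤ) := by
          rw [← Finset.mul_sum]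
          push_cast
          ring
        rw [h3, h1, h2]
        push_cast
        ring
      rw [Finset.sum_congr rfl (fun e _ => key e)]
      simp
    · exact hAoff' x y hxy
  set Dz : (Fin n → E) → ℤ :=
    fun f => (Matrix.of fun i j => N (Fin.succ i) (f i) * N (Fin.succ j) (f i)).det with hDz
  set Lz : Finset E → ℤ :=
    fun S => (Matrix.of fun i j => ∑ e ∈ S, N (Fin.succ i) e * N (Fin.succ j) e).det with hLz
  have stepC : ∀ f : Fin n → E, ¬ Function.Injective f → Dz f = 0 := by
    intro f hf
    rw [hDz]
    show (Matrix.of fun i j => N (Fin.succ i) (f i) * N (Fin.succ j) (f i)).det = 0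
    rw [det_smul_rows' (fun i => N (Fin.succ i) (f i)) (fun i j => N (Fin.succ j) (f i))]
    have hz : (Matrix.of fun i j => N (Fin.succ j) (f i)).det = 0 := by
      obtain ⟨i₁, i₂, h12, hne⟩ : ∃ i₁ i₂, f i₁ = f i₂ ∧ i₁ ≠ i₂ := by
        simp only [Function.Injective, not_forall] at hf
        obtain ⟨a, b, hab, hne⟩ := hf
        exact ⟨a, b, hab, hne⟩
      exact Matrix.det_zero_of_row_eq hne (by funext j; simp [h12])
    rw [hz, mul_zero]
  have step1 : (A.submatrix Fin.succ Fin.succ).det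
      = ∑ f : Fin n → E, (∏ i, κ (f i)) * ((Dz f : ℤ) : Polynomial ℤ) := by
    have hB : A.submatrix Fin.succ Fin.succ = Matrix.of fun i j =>
        ∑ e, κ e * ((N (Fin.succ i) e * N (Fin.succ j) e : ℤ) : Polynomial ℤ) := by
      apply Matrix.ext
      intro i j
      exact hA _ _
    rw [hB, det_sum_rows' Finset.univ
      (fun i e j => κ e * ((N (Fin.succ i) e * N (Fin.succ j) e : ℤ) : Polynomial ℤ)),
      Fintype.piFinset_univ]
    apply Finset.sum_congr rfl
    intro f _
    rw [det_smul_rows' (fun i => κ (f i))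
      (fun i j => ((N (Fin.succ i) (f i) * N (Fin.succ j) (f i) : ℤ) : Polynomial ℤ))]
    congr 1
    rw [hDz]
    show (Matrix.of fun i j => ((N (Fin.succ i) (f i) * N (Fin.succ j) (f i) : ℤ) : Polynomial ℤ)).det
      = _
    have : (Matrix.of fun i j => ((N (Fin.succ i) (f i) * N (Fin.succ j) (f i) : ℤ) : Polynomial ℤ))
        = (Int.castRingHom (Polynomial ℤ)).mapMatrix
            (Matrix.of fun i j => N (Fin.succ i) (f i) * N (Fin.succ j) (f i)) := rfl
    rw [this, ← RingHom.map_det]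
    simp
  have stepD : ∀ S : Finset E,
      Lz S = ∑ f ∈ (Fintype.piFinset fun _ : Fin n => S).filter Function.Injective, Dz f := by
    intro S
    rw [hLz]
    show (Matrix.of fun i j => ∑ e ∈ S, N (Fin.succ i) e * N (Fin.succ j) e).det = _
    rw [det_sum_rows' S (fun i e j => N (Fin.succ i) e * N (Fin.succ j) e)]
    rw [Finset.sum_filter_of_ne (fun f _ hf0 => by
      by_contra hinj
      exact hf0 (stepC f hinj))]
  have stepE : (A.submatrix Fin.succ Fin.succ).det
      = ∑ S ∈ Finset.powersetCard n Finset.univ,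
          (∏ e ∈ S, κ e) * ((Lz S : ℤ) : Polynomial ℤ) := by
    rw [step1]
    rw [← Finset.sum_filter_of_ne (s := (Finset.univ : Finset (Fin n → E)))
      (p := fun f => Function.Injective f)
      (fun f _ hf0 => by by_contra h; rw [stepC f h] at hf0; simp at hf0)]
    rw [← Finset.sum_fiberwise_of_maps_to (g := fun f : Fin n → E => Finset.image f Finset.univ)
      (t := Finset.powersetCard n Finset.univ) (fun f hf => by
        rw [Finset.mem_filter] at hf
        rw [Finset.mem_powersetCard]
        exact ⟨Finset.subset_univ _, by
          rw [Finset.card_image_of_injective _ hf.2, Finset.card_univ, Fintype.card_fin]⟩)]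
    apply Finset.sum_congr rfl
    intro S hS
    rw [Finset.mem_powersetCard] at hS
    have hsetEq : (Finset.univ.filter (fun f : Fin n → E => Function.Injective f)).filter
        (fun f => Finset.image f Finset.univ = S)
        = (Fintype.piFinset fun _ : Fin n => S).filter (fun f => Function.Injective f) := by
      ext f
      simp only [Finset.mem_filter, Finset.mem_univ, true_and, Fintype.mem_piFinset]
      constructor
      · rintro ⟨hinj, himg⟩
        exact ⟨fun i => himg ▸ Finset.mem_image_of_mem f (Finset.mem_univ i), hinj⟩
      · rintro ⟨hmem, hinj⟩
        refine ⟨hinj, Finset.eq_of_subset_of_card_le (fun e he => ?_) ?_⟩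
        · obtain ⟨i, _, rfl⟩ := Finset.mem_image.mp he
          exact hmem i
        · rw [Finset.card_image_of_injective _ hinj, Finset.card_univ, Fintype.card_fin, hS.2]
    rw [hsetEq, stepD S]
    push_cast
    rw [Finset.mul_sum]
    apply Finset.sum_congr rfl
    intro f hf
    rw [Finset.mem_filter, Fintype.mem_piFinset] at hf
    have himg : Finset.image f Finset.univ = S := by
      refine Finset.eq_of_subset_of_card_le (fun e he => ?_) ?_
      · obtain ⟨i, _, rfl⟩ := Finset.mem_image.mp he
        exact hf.1 i
      · rw [Finset.card_image_of_injective _ hf.2, Finset.card_univ, Fintype.card_fin, hS.2]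
    have hprod : ∏ i, κ (f i) = ∏ e ∈ S, κ e := by
      rw [← himg, Finset.prod_image (fun a _ b _ h => hf.2 h)]
    rw [hprod]
  have stepF : ∀ S : Finset E, S.card = n →
      Lz S = if (∀ u v : Fin (n + 1),
          Relation.EqvGen (fun u v => ∃ e ∈ S, ends e = s(u, v)) u v) then 1 else 0 := by
    intro S hS
    set τ : Fin n ≃ {x // x ∈ S} := (S.equivFinOfCardEq hS).symm with hτ
    set M₀ : Matrix (Fin n) (Fin n) ℤ := Matrix.of fun i k => N (Fin.succ i) ((τ k : E)) with hM₀
    have hfact : Lz S = M₀.det * M₀.det := by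
      have hmul : (Matrix.of fun i j => ∑ e ∈ S, N (Fin.succ i) e * N (Fin.succ j) e)
          = M₀ * M₀.transpose := by
        apply Matrix.ext
        intro i j
        rw [Matrix.mul_apply]
        show ∑ e ∈ S, N (Fin.succ i) e * N (Fin.succ j) e
          = ∑ k, N (Fin.succ i) ((τ k : E)) * N (Fin.succ j) ((τ k : E))
        rw [Equiv.sum_comp τ (fun x => N (Fin.succ i) (x : E) * N (Fin.succ j) (x : E))]
        exact (Finset.sum_coe_sort S fun e => N (Fin.succ i) e * N (Fin.succ j) e).symm
      rw [hLz]
      show (Matrix.of fun i j => ∑ e ∈ S, N (Fin.succ i) e * N (Fin.succ j) e).det = _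
      rw [hmul, Matrix.det_mul, Matrix.det_transpose]
    by_cases hcon : ∀ u v : Fin (n + 1),
        Relation.EqvGen (fun u v => ∃ e ∈ S, ends e = s(u, v)) u v
    · rw [if_pos hcon]
      set φ : (Fin n → ℤ) →ₗ[ℤ] (Fin n → ℤ) := Matrix.toLin' M₀ with hφ
      have hcol : ∀ k, (fun i => M₀ i k) ∈ LinearMap.range φ := by
        intro k
        refine ⟨Pi.single k 1, ?_⟩
        rw [hφ, Matrix.toLin'_apply, Matrix.mulVec_single]
        funext i
        simp
      set χ : Fin (n + 1) → (Fin n → ℤ) := fun x i => if Fin.succ i = x then 1 else 0 with hχ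
      have hedge : ∀ e ∈ S, (χ (o1 e) - χ (o2 e)) ∈ LinearMap.range φ := by
        intro e he
        have hcoleq : (fun i => M₀ i (τ.symm ⟨e, he⟩)) = χ (o1 e) - χ (o2 e) := by
          funext i
          show M₀ i (τ.symm ⟨e, he⟩) = χ (o1 e) i - χ (o2 e) i
          rw [hM₀]
          show N (Fin.succ i) ((τ (τ.symm ⟨e, he⟩) : E)) = _
          rw [Equiv.apply_symm_apply]
        rw [← hcoleq]
        exact hcol _
      have hreach : ∀ u v : Fin (n + 1),
          Relation.EqvGen (fun u v => ∃ e ∈ S, ends e = s(u, v)) u v →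
          χ u - χ v ∈ LinearMap.range φ := by
        intro u v h
        induction h with
        | rel u v h =>
          obtain ⟨e, he, hev⟩ := h
          rcases F1 e u v hev with ⟨h1, h2⟩ | ⟨h1, h2⟩
          · rw [← h1, ← h2]; exact hedge e he
          · have := (LinearMap.range φ).neg_mem (hedge e he)
            rw [neg_sub] at this
            rw [← h1, ← h2]
            exact this
        | refl u => rw [sub_self]; exact Submodule.zero_mem _
        | symm u v _ ih =>
          have := (LinearMap.range φ).neg_mem ih
          rwa [neg_sub] at this
        | trans u v w _ _ ih1 ih2 =>
          have := Submodule.add_mem _ ih1 ih2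
          rwa [sub_add_sub_cancel] at this
      have hsingle : ∀ j : Fin n, (fun j' => if j = j' then (1:ℤ) else 0) ∈ LinearMap.range φ := by
        intro j
        have h0 : χ 0 = 0 := by
          funext i
          simp [hχ, Fin.succ_ne_zero]
        have hj : χ (Fin.succ j) = fun j' => if j = j' then (1:ℤ) else 0 := by
          funext i
          show (if Fin.succ i = Fin.succ j then (1:ℤ) else 0) = _
          simp [Fin.succ_inj, eq_comm]
        have := hreach (Fin.succ j) 0 (hcon _ _)
        rwa [h0, sub_zero, hj] at this
      have hsurj : Function.Surjective φ := by
        rw [← LinearMap.range_eq_top, eq_top_iff]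
        intro v _
        rw [pi_eq_sum_univ v]
        exact Submodule.sum_mem _ fun j _ => Submodule.smul_mem _ _ (hsingle j)
      have hinj : Function.Injective φ :=
        OrzechProperty.injective_of_surjective_endomorphism φ hsurj
      have hunit : IsUnit M₀.det := by
        rw [← LinearMap.det_toLin' M₀]
        exact LinearEquiv.isUnit_det' (LinearEquiv.ofBijective φ ⟨hinj, hsurj⟩)
      rcases Int.isUnit_iff.mp hunit with h | h <;> rw [hfact, h] <;> norm_num
    · rw [if_neg hcon]
      set P : Fin (n + 1) → Prop := fun x =>
        Relation.EqvGen (fun u v => ∃ e ∈ S, ends e = s(u, v)) 0 x with hP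
      have hPiff : ∀ e ∈ S, (P (o1 e) ↔ P (o2 e)) := by
        intro e he
        have hrel : Relation.EqvGen (fun u v => ∃ e ∈ S, ends e = s(u, v)) (o1 e) (o2 e) :=
          Relation.EqvGen.rel _ _ ⟨e, he, (hout e).symm⟩
        exact ⟨fun h => Relation.EqvGen.trans _ _ _ h hrel,
          fun h => Relation.EqvGen.trans _ _ _ h (Relation.EqvGen.symm _ _ hrel)⟩
      set D' : Finset (Fin n) := Finset.univ.filter (fun i => ¬ P (Fin.succ i)) with hD'
      have hne : D'.Nonempty := by
        rw [Finset.filter_nonempty_iff]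
        by_contra hempty
        push_neg at hempty
        have hall : ∀ x, P x := by
          intro x
          rcases Fin.eq_zero_or_eq_succ x with rfl | ⟨i, rfl⟩
          · exact Relation.EqvGen.refl 0
          · by_contra hx
            exact hx (hempty i (Finset.mem_univ i))
        exact hcon fun u v =>
          Relation.EqvGen.trans _ _ _ (Relation.EqvGen.symm _ _ (hall u)) (hall v)
      have key : ∀ x : Fin (n + 1),
          ∑ i ∈ D', (if Fin.succ i = x then (1:ℤ) else 0) = if ¬ P x then 1 else 0 := by
        intro x
        rcases Fin.eq_zero_or_eq_succ x with rfl | ⟨j, rfl⟩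
        · rw [if_neg (not_not_intro (Relation.EqvGen.refl 0))]
          exact Finset.sum_eq_zero fun i _ => if_neg (Fin.succ_ne_zero i)
        · by_cases hj : P (Fin.succ j)
          · rw [if_neg (not_not_intro hj)]
            refine Finset.sum_eq_zero fun i hi => if_neg fun hsucc => ?_
            rw [Fin.succ_inj] at hsucc
            subst hsucc
            exact (Finset.mem_filter.mp hi).2 hj
          · rw [if_pos hj, Finset.sum_eq_single j]
            · simp
            · intro i _ hij
              exact if_neg (by simp [Fin.succ_inj, hij])
            · intro hjD
              exact absurd (show j ∈ D' from Finset.mem_filter.mpr ⟨Finset.mem_univ j, hj⟩) hjD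
      have hsum : ∀ k, ∑ i ∈ D', M₀ i k = 0 := by
        intro k
        have heS : ((τ k : E)) ∈ S := (τ k).2
        have hexp : ∑ i ∈ D', M₀ i k
            = (if ¬ P (o1 (τ k)) then (1:ℤ) else 0) - (if ¬ P (o2 (τ k)) then 1 else 0) := by
          rw [← key, ← key, ← Finset.sum_sub_distrib]
          apply Finset.sum_congr rfl
          intro i _
          rw [hM₀]
          show N (Fin.succ i) ((τ k : E)) = _
          rw [hN]
        rw [hexp]
        rcases hPiff _ heS with hiff
        by_cases h1 : P (o1 (τ k))
        · rw [if_neg (not_not_intro h1), if_neg (not_not_intro (hiff.mp h1)), sub_zero]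
        · rw [if_pos h1, if_pos (fun h2 => h1 (hiff.mpr h2)), sub_self]
      have h0 : M₀.det = 0 := det_eq_zero_of_sum_rows' M₀ D' hne hsum
      rw [hfact, h0, mul_zero]
  rw [stepE]
  have hidx : (Finset.univ : Finset E).powerset.filter
        (fun T => T.card = n ∧ ∀ u v : Fin (n + 1),
          Relation.EqvGen (fun u v => ∃ e ∈ T, ends e = s(u, v)) u v)
      = (Finset.powersetCard n Finset.univ).filter
          (fun T => ∀ u v : Fin (n + 1),
            Relation.EqvGen (fun u v => ∃ e ∈ T, ends e = s(u, v)) u v) := by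
    ext T
    simp [Finset.mem_powersetCard, Finset.subset_univ, and_assoc]
  rw [hidx]
  rw [← Finset.sum_filter_of_ne (p := fun T => ∀ u v : Fin (n + 1),
      Relation.EqvGen (fun u v => ∃ e ∈ T, ends e = s(u, v)) u v)
    (fun S hS hne => by
      by_contra hcon
      rw [Finset.mem_powersetCard] at hS
      rw [stepF S hS.2, if_neg hcon] at hne
      simp at hne)]
  apply Finset.sum_congr rfl
  intro S hS
  rw [Finset.mem_filter, Finset.mem_powersetCard] at hS
  rw [stepF S hS.1.2, if_pos hS.2]
  simp
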